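/- Let n ≥ 2 and let A = (a_{ij}) be a real n × n matrix such that a_{ij} a_{ji} ≥ 0 for all 1 ≤ i < j ≤ n. Then σ₁(A)·σ₁(A|1) ≥ σ₂(A) + (n/(2(n−1)))·[σ₁(A|1)]², where σ₁(A) = Σ_{i=1}^n a_{ii}, σ₁(A|1) = Σ_{i=2}^n a_{ii}, and σ₂(A) = Σ_{i<j} (a_{ii}a_{jj} − a_{ij}a_{ji}). -/

import Mathlib

open Finset

/-- Proposition 2.4 (inequality): if a_{ij}a_{ji} ≥ 0 for all i < j, then
σ₁(A)·σ₁(A|1) ≥ σ₂(A) + (n/(2(n−1)))·σ₁(A|1)².  (n ≥ 2 encoded as size n+2.) -/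
theorem stmt_1 (n : ℕ) (A : Matrix (Fin (n + 2)) (Fin (n + 2)) ℝ)
    (hA : ∀ i j : Fin (n + 2), i < j → 0 ≤ A i j * A j i) :
    (∑ i, A i i) * (∑ i, if i ≠ 0 then A i i else 0) ≥
      (∑ i, ∑ j, if i < j then A i i * A j j - A i j * A j i else 0)
        + ((n + 2 : ℝ) / (2 * (n + 1))) * (∑ i, if i ≠ 0 then A i i else 0) ^ 2 := by
  set t : ℝ := ∑ i, if i ≠ 0 then A i i else 0 with htdef
  set a : ℝ := A 0 0 with ha
  set Qr : ℝ := ∑ i : Fin (n+1), (A i.succ i.succ)^2 with hQrdef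
  set C : ℝ := ∑ i, ∑ j, if i < j then A i j * A j i else 0 with hCdef
  set P : ℝ := ∑ i, ∑ j, if i < j then A i i * A j j else 0 with hPdef
  have ht : t = ∑ i : Fin (n+1), A i.succ i.succ := by
    rw [htdef, Fin.sum_univ_succ]
    simp [Fin.succ_ne_zero]
  have hS : (∑ i, A i i) = a + t := by
    rw [ht, Fin.sum_univ_succ]
  have hQ : (∑ i, (A i i)^2) = a^2 + Qr := by
    rw [Fin.sum_univ_succ]
  have hCpos : 0 ≤ C := by
    rw [hCdef]
    apply Finset.sum_nonneg; intro i _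
    apply Finset.sum_nonneg; intro j _
    split
    · exact hA i j ‹_›
    · exact le_refl 0
  have hsigma2 : (∑ i, ∑ j, if i < j then A i i * A j j - A i j * A j i else 0)
      = P - C := by
    have key : ∀ i j : Fin (n+2), (if i < j then A i i * A j j - A i j * A j i else 0)
        = (if i < j then A i i * A j j else 0) - (if i < j then A i j * A j i else 0) := by
      intro i j; split <;> simp
    simp_rw [key, Finset.sum_sub_distrib]
    rfl
  have hswap : (∑ i : Fin (n+2), ∑ j, if j < i then A i i * A j j else 0) = P := by
    rw [Finset.sum_comm, hPdef]
    apply Finset.sum_congr rfl; intro i _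
    apply Finset.sum_congr rfl; intro j _
    split <;> [rw [mul_comm]; rfl]
  have hdiag : (∑ i : Fin (n+2), ∑ j, if i = j then A i i * A j j else 0)
      = ∑ i, (A i i)^2 := by
    apply Finset.sum_congr rfl; intro i _
    rw [Finset.sum_ite_eq]
    simp [sq]
  have hid : (a + t)^2 = (a^2 + Qr) + 2 * P := by
    rw [← hS, ← hQ, sq, Finset.sum_mul_sum]
    have key : ∀ i j : Fin (n+2), A i i * A j j
        = (if i < j then A i i * A j j else 0) + (if i = j then A i i * A j j else 0)
          + (if j < i then A i i * A j j else 0) := by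
      intro i j
      rcases lt_trichotomy i j with h|h|h
      · simp [h, h.ne, asymm h]
      · simp [h, lt_irrefl]
      · simp [h, h.ne', asymm h]
    have step : (∑ i : Fin (n+2), ∑ j, A i i * A j j)
        = (∑ i, ∑ j, if i < j then A i i * A j j else 0)
          + (∑ i, ∑ j, if i = j then A i i * A j j else 0)
          + (∑ i, ∑ j, if j < i then A i i * A j j else 0) := by
      rw [← Finset.sum_add_distrib, ← Finset.sum_add_distrib]
      apply Finset.sum_congr rfl; intro i _
      rw [← Finset.sum_add_distrib, ← Finset.sum_add_distrib]
      apply Finset.sum_congr rfl; intro j _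
      exact key i j
    rw [step, hswap, hdiag, ← hPdef]
    ring
  have hcs : t^2 ≤ (n+1 : ℝ) * Qr := by
    rw [ht, hQrdef]
    have := sq_sum_le_card_mul_sum_sq (s := (univ : Finset (Fin (n+1))))
      (f := fun i => A i.succ i.succ)
    simpa using this
  have hnpos : (0:ℝ) < (n:ℝ) + 1 := by positivity
  have hkey : ((n + 2 : ℝ) / (2 * (n + 1))) * t^2 ≤ t^2/2 + Qr/2 := by
    have hsplit : (n + 2 : ℝ) / (2 * (n + 1)) = 1/2 + 1/(2*((n:ℝ)+1)) := by
      field_simp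
      ring
    rw [hsplit]
    have h2 : t^2 / (2*((n:ℝ)+1)) ≤ Qr/2 := by
      rw [div_le_div_iff₀ (by positivity) (by norm_num)]
      nlinarith
    have : 1/(2*((n:ℝ)+1)) * t^2 = t^2 / (2*((n:ℝ)+1)) := by ring
    nlinarith
  rw [hsigma2, hS]
  nlinarith [hkey, hid, hCpos]
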